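/- The ordinal Cohen forcing for adding a subset of λ with conditions of size ≤ κ: the set ℙ of partial functions from λ to 2 of size ≤ κ, ordered by f ≤ g iff dom(f) ⊇ dom(g) and |{α ∈ dom(g) : f(α) ≠ g(α)}| < κ, is a transitive preorder that is κ⁺-closed: every ≤-decreasing sequence of length ≤ κ has a lower bound. -/

import Mathlib

open Cardinal Set
open scoped Classical

universe u v

namespace ForestPaper

variable {X : Type u} {μ : Type v}

/-- The domain of a partial function represented as an `Option`-valued function. -/
def pdom (f : X → Option μ) : Set X := {x | f x ≠ none}

/-- The range of a partial function. -/
def pran (f : X → Option μ) : Set μ := {y | ∃ x, f x = some y}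

/-- `Ext g f` means the partial function `g` extends `f`. -/
def Ext (g f : X → Option μ) : Prop := ∀ x, f x ≠ none → g x = f x

/-- Restriction of a partial function to a set. -/
noncomputable def pres (f : X → Option μ) (z : Set X) : X → Option μ :=
  fun x => if x ∈ z then f x else none

/-- The set of points of the common domain where `f` and `g` disagree. -/
def pdiff (f g : X → Option μ) : Set X :=
  {x | f x ≠ none ∧ g x ≠ none ∧ f x ≠ g x}

/-- `f` and `g` agree on their common domain. -/
def Agree (f g : X → Option μ) : Prop :=
  ∀ x, f x ≠ none → g x ≠ none → f x = g x

/-- Two members of `F` are compatible if they have a common extension in `F`. -/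
def Compat (F : Set (X → Option μ)) (f g : X → Option μ) : Prop :=
  ∃ h ∈ F, Ext h f ∧ Ext h g

/-- `A` is an antichain in `F`: a pairwise incompatible subset of `F`. -/
def IsAntichainIn (F A : Set (X → Option μ)) : Prop :=
  A ⊆ F ∧ ∀ f ∈ A, ∀ g ∈ A, f ≠ g → ¬ Compat F f g

/-- `A` is a maximal antichain in `F`. -/
def IsMaxAntichainIn (F A : Set (X → Option μ)) : Prop :=
  IsAntichainIn F A ∧ ∀ f ∈ F, ∃ g ∈ A, Compat F f g

/-- A `(c, X, μ)`-forest: a collection of partial functions from `X` to `μ` whose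
domains are exactly the subsets of `X` of size `< c`, with coherent restrictions
between levels (every restriction of a member is a member, and every member
extends to any larger admissible domain). -/
structure IsForest (c : Cardinal.{u}) (F : Set (X → Option μ)) : Prop where
  dom_small : ∀ f ∈ F, #(pdom f) < c
  exists_dom : ∀ z : Set X, #z < c → ∃ f ∈ F, pdom f = z
  restrict_mem : ∀ f ∈ F, ∀ z : Set X, z ⊆ pdom f → pres f z ∈ F
  extend_mem : ∀ f ∈ F, ∀ z : Set X, #z < c → pdom f ⊆ z →
    ∃ g ∈ F, pdom g = z ∧ Ext g f

/-- A family is `κ`-coherent when any two members disagree at `< κ` many points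
of their common domain. -/
def Coherent (κ : Cardinal.{u}) (F : Set (X → Option μ)) : Prop :=
  ∀ f ∈ F, ∀ g ∈ F, #(pdiff f g) < κ

/-- `F` is closed under modifications at `< κ` many points. -/
def ClosedMod (κ : Cardinal.{u}) (F : Set (X → Option μ)) : Prop :=
  ∀ f ∈ F, ∀ f' : X → Option μ, pdom f' = pdom f →
    #{x | f x ≠ f' x} < κ → f' ∈ F

/-- A partial function is injective (on its domain). -/
def PInj (f : X → Option μ) : Prop :=
  ∀ x y, f x ≠ none → f x = f y → x = y

/-- A partial function is `< κ`-to-1: every fiber has size `< κ`. -/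
def SmallTo1 (κ : Cardinal.{u}) (f : X → Option μ) : Prop :=
  ∀ y : μ, #{x | f x = some y} < κ

/-- `F` contains a `⊆`-well-ordered chain of order type `o`. -/
def HasChain (o : Ordinal.{u}) (F : Set (X → Option μ)) : Prop :=
  ∃ c : o.ToType → (X → Option μ), (∀ i, c i ∈ F) ∧
    ∀ i j, i < j → Ext (c j) (c i) ∧ c i ≠ c j

/-- The ordering of the "Cohen with `< κ` disagreement" forcing: `f ≤ g` iff
`dom f ⊇ dom g` and `f` disagrees with `g` at fewer than `κ` points of `dom g`. -/
def CoLE {X : Type u} (κ : Cardinal.{u}) (f g : X → Option Bool) : Prop :=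
  pdom g ⊆ pdom f ∧ #{x | g x ≠ none ∧ f x ≠ g x} < κ

/-- The poset of partial functions from `λ` to `2` of size `≤ κ`, ordered with
`< κ` disagreement allowed, is a transitive, reflexive ordering that is
`κ⁺`-closed: every decreasing sequence of length `≤ κ` has a lower bound. -/
theorem stmt15 {X : Type u} (κ : Cardinal.{u}) (hκ : κ.IsRegular)
    (hpow : (2 : Cardinal.{u}) ^< κ = κ) (hX : κ < #X) :
    (∀ f : X → Option Bool, CoLE κ f f) ∧
    (∀ f g h : X → Option Bool, CoLE κ f g → CoLE κ g h → CoLE κ f h) ∧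
    (∀ δ : Ordinal.{u}, δ < (Order.succ κ).ord →
      ∀ c : δ.ToType → {f : X → Option Bool // #(pdom f) ≤ κ},
        (∀ i j, i < j → CoLE κ (c j).1 (c i).1) →
        ∃ f : X → Option Bool, #(pdom f) ≤ κ ∧ ∀ i, CoLE κ f (c i).1) := by
  have hκ0 : ℵ₀ ≤ κ := hκ.aleph0_le
  refine ⟨?_, ?_, ?_⟩
  · -- reflexivity
    intro f
    refine ⟨subset_rfl, ?_⟩
    have : {x | f x ≠ none ∧ f x ≠ f x} = (∅ : Set X) := by
      ext x; simp
    rw [this]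
    simpa using hκ.pos
  · -- transitivity
    rintro f g h ⟨hfg1, hfg2⟩ ⟨hgh1, hgh2⟩
    refine ⟨hgh1.trans hfg1, ?_⟩
    have hsub : {x | h x ≠ none ∧ f x ≠ h x} ⊆
        {x | h x ≠ none ∧ g x ≠ h x} ∪ {x | g x ≠ none ∧ f x ≠ g x} := by
      rintro x ⟨hx1, hx2⟩
      by_cases hgx : g x = h x
      · right; exact ⟨by rw [hgx]; exact hx1, by rw [hgx]; exact hx2⟩
      · left; exact ⟨hx1, hgx⟩
    calc #{x | h x ≠ none ∧ f x ≠ h x}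
        ≤ #(({x | h x ≠ none ∧ g x ≠ h x} ∪ {x | g x ≠ none ∧ f x ≠ g x} : Set X)) :=
          Cardinal.mk_le_mk_of_subset hsub
      _ ≤ #{x | h x ≠ none ∧ g x ≠ h x} + #{x | g x ≠ none ∧ f x ≠ g x} :=
          Cardinal.mk_union_le _ _
      _ < κ := Cardinal.add_lt_of_lt hκ0 hgh2 hfg2
  · -- κ⁺-closure
    intro δ hδ c hc
    have hI : #δ.ToType ≤ κ := by
      rw [Cardinal.mk_toType]
      exact Order.lt_succ_iff.mp (Cardinal.lt_ord.mp hδ)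
    -- pairwise coherence of the chain
    have hcoh : ∀ i j : δ.ToType,
        #{x | (c i).1 x ≠ none ∧ (c j).1 x ≠ none ∧ (c j).1 x ≠ (c i).1 x} < κ := by
      intro i j
      rcases lt_trichotomy i j with hij | hij | hij
      · refine lt_of_le_of_lt (Cardinal.mk_le_mk_of_subset ?_) (hc i j hij).2
        rintro x ⟨h1, _, h3⟩; exact ⟨h1, h3⟩
      · subst hij
        have : {x | (c i).1 x ≠ none ∧ (c i).1 x ≠ none ∧ (c i).1 x ≠ (c i).1 x} = (∅ : Set X) := by
          ext x; simp
        rw [this]; simpa using hκ.pos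
      · refine lt_of_le_of_lt (Cardinal.mk_le_mk_of_subset ?_) (hc j i hij).2
        rintro x ⟨h1, h2, h3⟩; exact ⟨h2, fun h => h3 h.symm⟩
    set D : Set X := ⋃ i, pdom (c i).1 with hDdef
    have hD : #D ≤ κ := by
      refine le_trans (Cardinal.mk_iUnion_le _) ?_
      have h1 : ⨆ i, #(pdom (c i).1) ≤ κ := ciSup_le' fun i => (c i).2
      calc #δ.ToType * ⨆ i, #(pdom (c i).1) ≤ κ * κ := mul_le_mul' hI h1
        _ = κ := Cardinal.mul_eq_self hκ0
    have hne : Nonempty κ.ord.ToType :=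
      Ordinal.toType_nonempty_iff_ne_zero.mpr
        (fun h => (hκ.pos.ne' (Cardinal.ord_eq_zero.mp h)))
    have hmkT : #κ.ord.ToType = κ := Cardinal.mk_ord_toType κ
    obtain ⟨e⟩ : Nonempty (D ↪ κ.ord.ToType) := by
      rw [← Cardinal.le_def, hmkT]; exact hD
    obtain ⟨ι⟩ : Nonempty (δ.ToType ↪ κ.ord.ToType) := by
      rw [← Cardinal.le_def, hmkT]; exact hI
    have wf : WellFounded ((· < ·) : κ.ord.ToType → κ.ord.ToType → Prop) :=
      (inferInstance : IsWellFounded _ _).wf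
    set r : X → κ.ord.ToType := fun x => if h : x ∈ D then e ⟨x, h⟩ else Classical.arbitrary _
      with hrdef
    set T : X → Set κ.ord.ToType := fun x => ι '' {i | (c i).1 x ≠ none} with hTdef
    set f : X → Option Bool := fun x =>
      if h : (T x).Nonempty then
        if wf.min (T x) h ≤ r x then (c (wf.min_mem (T x) h).choose).1 x else some true
      else none with hfdef
    have hTne : ∀ x (i : δ.ToType), (c i).1 x ≠ none → (T x).Nonempty :=
      fun x i h => ⟨ι i, i, h, rfl⟩
    have hfnone : ∀ x, f x ≠ none ↔ x ∈ D := by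
      intro x
      constructor
      · intro hfx
        by_contra hxD
        have hTe : ¬ (T x).Nonempty := by
          rintro ⟨y, i, hi, _⟩
          exact hxD (Set.mem_iUnion.mpr ⟨i, hi⟩)
        simp only [hfdef, dif_neg hTe] at hfx
        exact hfx rfl
      · intro hxD
        obtain ⟨_, ⟨i, rfl⟩, hxi⟩ := hxD
        have hT : (T x).Nonempty := hTne x i hxi
        simp only [hfdef, dif_pos hT]
        split
        · exact ((wf.min_mem (T x) hT).choose_spec).1
        · simp
    have hpdomf : pdom f = D := by
      ext x; exact hfnone x
    refine ⟨f, by rw [hpdomf]; exact hD, ?_⟩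
    intro i
    constructor
    · rw [hpdomf]
      exact Set.subset_iUnion (fun j => pdom (c j).1) i
    · -- the disagreement set is small
      set A1 : Set X := {x | x ∈ D ∧ r x < ι i} with hA1def
      set A2 : Set X := ⋃ j : {j : δ.ToType // ι j ≤ ι i},
        {x | (c i).1 x ≠ none ∧ (c j.1).1 x ≠ none ∧ (c j.1).1 x ≠ (c i).1 x} with hA2def
      have hsub : {x | (c i).1 x ≠ none ∧ f x ≠ (c i).1 x} ⊆ A1 ∪ A2 := by
        rintro x ⟨hxi, hxf⟩
        have hxD : x ∈ D := Set.mem_iUnion.mpr ⟨i, hxi⟩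
        have hT : (T x).Nonempty := hTne x i hxi
        have hmin_le : wf.min (T x) hT ≤ ι i :=
          not_lt.mp (wf.not_lt_min (T x) (x := ι i) ⟨i, hxi, rfl⟩)
        rcases lt_or_ge (r x) (ι i) with hr | hr
        · exact Or.inl ⟨hxD, hr⟩
        · right
          have hmr : wf.min (T x) hT ≤ r x := hmin_le.trans hr
          have hfx : f x = (c (wf.min_mem (T x) hT).choose).1 x := by
            simp only [hfdef]
            rw [dif_pos hT, if_pos hmr]
          have hspec := (wf.min_mem (T x) hT).choose_spec
          refine Set.mem_iUnion.mpr ⟨⟨(wf.min_mem (T x) hT).choose, ?_⟩, hxi, hspec.1, ?_⟩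
          · rw [hspec.2]; exact hmin_le
          · rw [← hfx]; exact hxf
      have hA1 : #A1 < κ := by
        have hinj : Nonempty (A1 ↪ (Set.Iio (ι i))) := by
          refine ⟨⟨fun x => ⟨r x, x.2.2⟩, ?_⟩⟩
          rintro ⟨x, hx⟩ ⟨y, hy⟩ hxy
          simp only [Subtype.mk.injEq] at hxy ⊢
          have hx' := hx.1; have hy' := hy.1
          replace hxy : r x = r y := congrArg Subtype.val hxy
          rw [hrdef] at hxy
          simp only [dif_pos hx', dif_pos hy'] at hxy
          have := e.injective hxy
          exact congrArg Subtype.val this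
        exact lt_of_le_of_lt ((Cardinal.le_def _ _).mpr hinj) (Cardinal.mk_Iio_ord_toType (ι i))
      have hA2 : #A2 < κ := by
        refine lt_of_le_of_lt Cardinal.mk_iUnion_le_sum_mk ?_
        refine Cardinal.sum_lt_of_isRegular hκ ?_ (fun j => hcoh i j.1)
        have hinj : Nonempty ({j : δ.ToType // ι j ≤ ι i} ↪ (Set.Iio (ι i) ∪ {ι i} : Set κ.ord.ToType)) := by
          refine ⟨⟨fun j => ⟨ι j.1, ?_⟩, ?_⟩⟩
          · rcases lt_or_eq_of_le j.2 with h | h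
            · exact Or.inl h
            · exact Or.inr h
          · rintro ⟨j, hj⟩ ⟨k, hk⟩ hjk
            simp only [Subtype.mk.injEq] at hjk ⊢
            exact ι.injective hjk
        refine lt_of_le_of_lt ((Cardinal.le_def _ _).mpr hinj) ?_
        refine lt_of_le_of_lt (Cardinal.mk_union_le _ _) ?_
        exact Cardinal.add_lt_of_lt hκ0 (Cardinal.mk_Iio_ord_toType (ι i))
          (lt_of_le_of_lt (Cardinal.mk_singleton _).le (Cardinal.one_lt_aleph0.trans_le hκ0))
      calc #{x | (c i).1 x ≠ none ∧ f x ≠ (c i).1 x}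
          ≤ #((A1 ∪ A2 : Set X)) := Cardinal.mk_le_mk_of_subset hsub
        _ ≤ #A1 + #A2 := Cardinal.mk_union_le _ _
        _ < κ := Cardinal.add_lt_of_lt hκ0 hA1 hA2
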